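/- arXiv:0909.0835 — 2 statements merged into one kernel-verified Lean document; each statement's English description precedes it below -/
import Mathlib

section
/- (Lemma 2, Riemann approximation.) Let f:ℝ→ℝ be continuously differentiable with f and f' bounded, and set A_n = (2^{j/2}/n)Σ_{i=1}^n 1_{jk}(i/n) f(X_{i/n}) − 2^{j/2}∫₀¹ 1_{jk}(s) f(X_s) ds. Then there is a constant c, depending only on f and σ (not on n, j, k), such that E[A_n²] ≤ c·2^{-j}·n^{-1} for all n, all j ≥ 0 with n2^{-j} ∈ ℕ, and all 0 ≤ k ≤ 2^j − 1. -/
open MeasureTheory ProbabilityTheory Real Filter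
open scoped ENNReal NNReal

noncomputable section

namespace RoundOff

/-- `W` is a standard Brownian motion on `(Ω, 𝔉, ℙ)`: it starts at `0`, has continuous
paths, Gaussian increments `W t - W s ∼ N(0, t - s)` and independent increments. -/
def IsStdBM {Ω : Type*} [MeasureSpace Ω] (W : ℝ → Ω → ℝ) : Prop :=
  (∀ t, Measurable (W t)) ∧
  (∀ ω, W 0 ω = 0) ∧
  (∀ ω, Continuous fun t => W t ω) ∧
  (∀ s t : ℝ, 0 ≤ s → s ≤ t →
    Measure.map (fun ω => W t ω - W s ω) ℙ = gaussianReal 0 (Real.toNNReal (t - s))) ∧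
  ∀ (n : ℕ) (t : Fin (n + 1) → ℝ), Monotone t → (∀ i, 0 ≤ t i) →
    iIndepFun
      (fun i : Fin n => fun ω => W (t i.succ) ω - W (t i.castSucc) ω) ℙ

/-- Assumption A: `α` is positive, decreasing to `0` and `sup_n α_n (log n)² < ∞`. -/
def AssumptionA (α : ℕ → ℝ) : Prop :=
  (∀ n, 0 < α n) ∧ Antitone α ∧ Tendsto α atTop (nhds 0) ∧
  ∃ C, ∀ n : ℕ, α n * Real.log n ^ 2 ≤ C

/-- Assumption A1 (with exponent `ρ`): `α` is positive, decreasing to `0` and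
`sup_n α_n^{1-ρ} (log n)² < ∞`. -/
def AssumptionA1 (α : ℕ → ℝ) (ρ : ℝ) : Prop :=
  (∀ n, 0 < α n) ∧ Antitone α ∧ Tendsto α atTop (nhds 0) ∧ 0 < ρ ∧
  ∃ C, ∀ n : ℕ, α n ^ (1 - ρ) * Real.log n ^ 2 ≤ C

/-- Assumption B': `σ` is C² with `σ, σ', σ''` bounded and `σ ≥ c₀ > 0`. -/
def AssumptionBp (σ : ℝ → ℝ) : Prop :=
  ContDiff ℝ 2 σ ∧
  (∃ C, ∀ x, |σ x| ≤ C ∧ |deriv σ x| ≤ C ∧ |deriv (deriv σ) x| ≤ C) ∧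
  ∃ c₀ > 0, ∀ x, c₀ ≤ σ x

/-- Assumption C': `g` is C² with `g, g', g''` bounded and `g ≥ c₁ > 0`. -/
def AssumptionCp (g : ℝ → ℝ) : Prop :=
  ContDiff ℝ 2 g ∧
  (∃ C, ∀ x, |g x| ≤ C ∧ |deriv g x| ≤ C ∧ |deriv (deriv g) x| ≤ C) ∧
  ∃ c₁ > 0, ∀ x, c₁ ≤ g x

/-- Assumption C1': C' together with: `g'` of constant sign and `|g'|^{1/2}` C² with
bounded derivatives. -/
def AssumptionC1p (g : ℝ → ℝ) : Prop :=
  AssumptionCp g ∧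
  ((∀ x, 0 ≤ deriv g x) ∨ (∀ x, deriv g x ≤ 0)) ∧
  ContDiff ℝ 2 (fun x => Real.sqrt |deriv g x|) ∧
  ∃ C, ∀ x, |deriv (fun x => Real.sqrt |deriv g x|) x| ≤ C ∧
            |deriv (deriv (fun x => Real.sqrt |deriv g x|)) x| ≤ C

/-- Assumption D (via the representation `X = h ∘ W`): `h` solves `h' = σ ∘ h`, `h 0 = x₀`,
i.e. `h = S⁻¹(· + S x₀)` with `S(x) = ∫₀ˣ dy/σ(y)`. -/
def IsScaleFun (σ : ℝ → ℝ) (x₀ : ℝ) (h : ℝ → ℝ) : Prop :=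
  h 0 = x₀ ∧ ∀ x, HasDerivAt h (σ (h x)) x

def beta (α : ℕ → ℝ) (n : ℕ) : ℝ := α n * Real.sqrt n

/-- `r_n = max (α_n, n^{-1/2})`. -/
def rr (α : ℕ → ℝ) (n : ℕ) : ℝ := max (α n) (1 / Real.sqrt n)

/-- Round-off of `x` at level `a`: `a ⌊x / a⌋`. -/
def rnd (a x : ℝ) : ℝ := a * (⌊x / a⌋ : ℤ)

/-- `1_{jk}`: indicator of `(k 2^{-j}, (k+1) 2^{-j}]`. -/
def ind (j k : ℕ) (s : ℝ) : ℝ :=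
  Set.indicator (Set.Ioc ((k : ℝ) / 2 ^ j) (((k : ℝ) + 1) / 2 ^ j)) 1 s

/-- The Haar-type wavelet: `-1` on `[0,1/2]`, `+1` on `(1/2,1]`, `0` elsewhere. -/
def psi (s : ℝ) : ℝ :=
  Set.indicator (Set.Ioc (1 / 2 : ℝ) 1) 1 s - Set.indicator (Set.Icc (0 : ℝ) (1 / 2)) 1 s

def psijk (j k : ℕ) (s : ℝ) : ℝ := (2 : ℝ) ^ ((j : ℝ) / 2) * psi (2 ^ j * s - (k : ℝ))

/-- `G(u) = ∫₀ᵘ ψ` -/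
def Gpsi (u : ℝ) : ℝ := ∫ v in (0 : ℝ)..u, psi v

/-- `c(ψ) = ∫₀¹ G(u)² du` -/
def cpsi : ℝ := ∫ u in (0 : ℝ)..1, Gpsi u ^ 2

variable {Ω : Type*} [MeasureSpace Ω]

/-- The diffusion `X_t = h(W_t)`. -/
def X (W : ℝ → Ω → ℝ) (h : ℝ → ℝ) (t : ℝ) (ω : Ω) : ℝ := h (W t ω)

/-- The rounded observation `X^{(α_n)}_{i/n}`. -/
def Xr (W : ℝ → Ω → ℝ) (h : ℝ → ℝ) (α : ℕ → ℝ) (n i : ℕ) (ω : Ω) : ℝ :=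
  rnd (α n) (h (W ((i : ℝ) / n) ω))

/-- `θ = ∫₀¹ g(X_s)² σ(X_s)² ds`. -/
def theta (W : ℝ → Ω → ℝ) (h σ g : ℝ → ℝ) (ω : Ω) : ℝ :=
  ∫ s in (0 : ℝ)..1, g (h (W s ω)) ^ 2 * σ (h (W s ω)) ^ 2

/-- `ĉ_{jk}`. -/
def chat (W : ℝ → Ω → ℝ) (h : ℝ → ℝ) (α : ℕ → ℝ) (g : ℝ → ℝ) (n j k : ℕ) (ω : Ω) : ℝ :=
  Real.sqrt (π / 2) * (2 : ℝ) ^ ((j : ℝ) / 2) / Real.sqrt n *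
    ∑ i ∈ Finset.Icc 1 n, ind j k ((i : ℝ) / n) * g (Xr W h α n (i - 1) ω) *
      |Xr W h α n i ω - Xr W h α n (i - 1) ω|

/-- `d̂_{jk}`. -/
def dhat (W : ℝ → Ω → ℝ) (h : ℝ → ℝ) (α : ℕ → ℝ) (g : ℝ → ℝ) (n j k : ℕ) (ω : Ω) : ℝ :=
  Real.sqrt (π / 2) / Real.sqrt n *
    ∑ i ∈ Finset.Icc 1 n, psijk j k ((i : ℝ) / n) * g (Xr W h α n (i - 1) ω) *
      |Xr W h α n i ω - Xr W h α n (i - 1) ω|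

/-- `Q̂_j = Σ_k d̂_{jk}²`. -/
def Qhat (W : ℝ → Ω → ℝ) (h : ℝ → ℝ) (α : ℕ → ℝ) (g : ℝ → ℝ) (n j : ℕ) (ω : Ω) : ℝ :=
  ∑ k ∈ Finset.range (2 ^ j), dhat W h α g n j k ω ^ 2

/-- `ê_{jk}`. -/
def ehat (W : ℝ → Ω → ℝ) (h : ℝ → ℝ) (α : ℕ → ℝ) (g : ℝ → ℝ) (n j k : ℕ) (ω : Ω) : ℝ :=
  Real.sqrt (π / 2) * (2 : ℝ) ^ ((j : ℝ) / 2) / Real.sqrt n *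
    ∑ i ∈ Finset.Icc 1 n, ind j k ((i : ℝ) / n) *
      Real.sqrt |g (Xr W h α n (i - 1) ω) * deriv g (Xr W h α n (i - 1) ω)| *
      |Xr W h α n i ω - Xr W h α n (i - 1) ω|

/-- `j_{0,n} = ⌊log₂ (min (α_n⁻¹, √n))⌋`. -/
def j0 (α : ℕ → ℝ) (n : ℕ) : ℕ := (⌊Real.logb 2 (min (α n)⁻¹ (Real.sqrt n))⌋).toNat

/-- The first estimator `θ̃_n`. -/
def thetaTilde (W : ℝ → Ω → ℝ) (h : ℝ → ℝ) (α : ℕ → ℝ) (g : ℝ → ℝ) (n : ℕ) (ω : Ω) : ℝ :=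
  ∑ k ∈ Finset.range (2 ^ j0 α n), chat W h α g n (j0 α n) k ω ^ 2

/-- `⌊(1+a) log₂ r_n⁻¹⌋`. -/
def jmax (α : ℕ → ℝ) (a : ℝ) (n : ℕ) : ℕ := (⌊(1 + a) * Real.logb 2 (rr α n)⁻¹⌋).toNat

/-- `R_n(S)`. -/
def Rn (W : ℝ → Ω → ℝ) (h : ℝ → ℝ) (α : ℕ → ℝ) (g : ℝ → ℝ) (j1 j2 : ℕ → ℕ) (a : ℝ)
    (n : ℕ) (ω : Ω) : ℝ :=
  ∑ j ∈ Finset.Icc (j1 n) (jmax α a n), (2 : ℝ) ^ ((j2 n : ℤ) - (j : ℤ)) * Qhat W h α g n (j2 n) ω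

open Classical in
/-- `1_{g' ≥ 0} - 1_{g' ≤ 0}`. -/
def sgnFactor (g : ℝ → ℝ) : ℝ :=
  (if ∀ x, 0 ≤ deriv g x then (1 : ℝ) else 0) - (if ∀ x, deriv g x ≤ 0 then (1 : ℝ) else 0)

/-- Membership of `(a, j1, j2)` in the set `𝒮`. -/
def inS (α : ℕ → ℝ) (a : ℝ) (j1 j2 : ℕ → ℕ) : Prop :=
  0 < a ∧ a < 1 ∧ (∃ C, ∀ n : ℕ, α n ^ (1 - a) * Real.log n ^ 2 ≤ C) ∧
  Tendsto (fun n => rr α n * (2 : ℝ) ^ (2 * (j2 n : ℤ) - (j1 n : ℤ))) atTop (nhds 0) ∧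
  Tendsto (fun n : ℕ =>
    (rr α n)⁻¹ * (2 : ℝ) ^ ((j1 n : ℝ) / 2) * (α n ^ 2 * Real.log n + 1 / n)) atTop (nhds 0) ∧
  Tendsto (fun n => rr α n * (2 : ℝ) ^ (j1 n)) atTop (nhds 0) ∧
  Tendsto (fun n => (rr α n)⁻¹ * (2 : ℝ) ^ (-(3 * (j1 n : ℝ)) / 2)) atTop (nhds 0) ∧
  Tendsto (fun n => (2 : ℝ) ^ ((j2 n : ℤ) - (j1 n : ℤ))) atTop (nhds 0) ∧
  Tendsto (fun n => (rr α n)⁻¹ * (2 : ℝ) ^ (-((j1 n : ℝ) + (j2 n : ℝ) / 2))) atTop (nhds 0)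

/-- The compensated estimator `θ̂_n(S)`. -/
def thetaHat (W : ℝ → Ω → ℝ) (h : ℝ → ℝ) (α : ℕ → ℝ) (g : ℝ → ℝ) (j1 j2 : ℕ → ℕ) (a : ℝ)
    (n : ℕ) (ω : Ω) : ℝ :=
  (∑ k ∈ Finset.range (2 ^ j1 n), chat W h α g n (j1 n) k ω ^ 2) + Rn W h α g j1 j2 a n ω +
    α n * sgnFactor g * ∑ k ∈ Finset.range (2 ^ j0 α n), ehat W h α g n (j0 α n) k ω ^ 2

/-! Kernels and sampling functions -/

/-- `S(x) = ∫₀ˣ dy / σ(y)`. -/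
def Sfun (σ : ℝ → ℝ) (x : ℝ) : ℝ := ∫ y in (0 : ℝ)..x, (σ y)⁻¹

/-- The transition density `p_t(x,y)` of `X`. -/
def pker (σ : ℝ → ℝ) (t x y : ℝ) : ℝ :=
  (σ y)⁻¹ * (Real.sqrt (2 * π * t))⁻¹ * Real.exp (-(Sfun σ y - Sfun σ x) ^ 2 / (2 * t))

/-- `q_t(x,y) = p_t(x, x+y)`. -/
def qker (σ : ℝ → ℝ) (t x y : ℝ) : ℝ := pker σ t x (x + y)

/-- Density of a centered Gaussian with standard deviation `s`. -/
def gaussDensity (s y : ℝ) : ℝ :=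
  (Real.sqrt (2 * π * s ^ 2))⁻¹ * Real.exp (-(y ^ 2) / (2 * s ^ 2))

/-- `mf(x,u) = ∫ h_{σ(x)}(y) f(x,u,y) dy`. -/
def mF (σ : ℝ → ℝ) (f : ℝ → ℝ → ℝ → ℝ) (x u : ℝ) : ℝ := ∫ y, gaussDensity (σ x) y * f x u y

/-- `Mf(x) = ∫₀¹ mf(x,u) du`. -/
def MF (σ : ℝ → ℝ) (f : ℝ → ℝ → ℝ → ℝ) (x : ℝ) : ℝ := ∫ u in (0 : ℝ)..1, mF σ f x u

/-- `m_n f(x,u) = ∫ q_{1/n}(x,y) f(x,u,√n y) dy`. -/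
def mn (σ : ℝ → ℝ) (f : ℝ → ℝ → ℝ → ℝ) (n : ℕ) (x u : ℝ) : ℝ :=
  ∫ y, qker σ (1 / n) x y * f x u (Real.sqrt n * y)

/-- `M_n f(x) = ∫₀¹ m_n f(x,u) du`. -/
def Mnf (σ : ℝ → ℝ) (f : ℝ → ℝ → ℝ → ℝ) (n : ℕ) (x : ℝ) : ℝ :=
  ∫ u in (0 : ℝ)..1, mn σ f n x u

/-- `\bar m_n f(x) = m_n f(x,{x/α_n}) - M_n f(x)`. -/
def mbar (σ : ℝ → ℝ) (α : ℕ → ℝ) (f : ℝ → ℝ → ℝ → ℝ) (n : ℕ) (x : ℝ) : ℝ :=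
  mn σ f n x (Int.fract (x / α n)) - Mnf σ f n x

/-- `l_i^n f(x) = ∫ p_{i/n}(x,y) \bar m_n f(y) dy`. -/
def lin (σ : ℝ → ℝ) (α : ℕ → ℝ) (f : ℝ → ℝ → ℝ → ℝ) (n i : ℕ) (x : ℝ) : ℝ :=
  ∫ y, pker σ ((i : ℝ) / n) x y * mbar σ α f n y

/-- Assumption E with explicit constant `γ`. -/
def AssumptionEWith (bβ : ℕ → ℝ) (γ : ℝ) (f : ℕ → ℝ → ℝ → ℝ → ℝ) : Prop :=
  0 < γ ∧
  (∀ n u y, ContDiff ℝ 2 fun x => f n x u y) ∧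
  ∀ n : ℕ,
    (∀ x u y, |f n x u y| ≤ γ * (1 + bβ n ^ 2) * (1 + |y| ^ γ)) ∧
    (∀ x y, (∫ u in (0 : ℝ)..1, |f n x u y|) ≤ γ * (1 + |y| ^ γ)) ∧
    (∀ i : ℕ, 1 ≤ i → i ≤ 2 → ∀ x u y,
      |iteratedDeriv i (fun x => f n x u y) x| ≤ γ * (1 + bβ n ^ 2) * (1 + |y| ^ γ)) ∧
    (∀ i : ℕ, 1 ≤ i → i ≤ 2 → ∀ x y,
      (∫ u in (0 : ℝ)..1, |iteratedDeriv i (fun x => f n x u y) x|) ≤ γ * (1 + |y| ^ γ))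

/-- Assumption E. -/
def AssumptionE (bβ : ℕ → ℝ) (f : ℕ → ℝ → ℝ → ℝ → ℝ) : Prop :=
  ∃ γ, AssumptionEWith bβ γ f

/-- `V^{jk}(n, f)` for a sampling function `f(x,u,y)`. -/
def Vjk (W : ℝ → Ω → ℝ) (h : ℝ → ℝ) (α : ℕ → ℝ) (f : ℝ → ℝ → ℝ → ℝ) (n j k : ℕ)
    (ω : Ω) : ℝ :=
  (2 : ℝ) ^ ((j : ℝ) / 2) / n * ∑ i ∈ Finset.Icc 1 n, ind j k ((i : ℝ) / n) *
    f (h (W (((i : ℝ) - 1) / n) ω)) (Int.fract (h (W (((i : ℝ) - 1) / n) ω) / α n))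
      (Real.sqrt n * (h (W ((i : ℝ) / n) ω) - h (W (((i : ℝ) - 1) / n) ω)))

/-- `V^{jk}(n, G)` for a function `G` of `x` alone. -/
def VjkX (W : ℝ → Ω → ℝ) (h : ℝ → ℝ) (G : ℝ → ℝ) (n j k : ℕ) (ω : Ω) : ℝ :=
  (2 : ℝ) ^ ((j : ℝ) / 2) / n * ∑ i ∈ Finset.Icc 1 n, ind j k ((i : ℝ) / n) *
    G (h (W (((i : ℝ) - 1) / n) ω))

/-- The natural filtration of `W` at time `t`. -/
def filt (W : ℝ → Ω → ℝ) (t : ℝ) : MeasurableSpace Ω :=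
  ⨆ s ∈ Set.Icc (0 : ℝ) t, MeasurableSpace.comap (W s) inferInstance

/-- `f_i^n`. -/
def fF (W : ℝ → Ω → ℝ) (h : ℝ → ℝ) (α : ℕ → ℝ) (f : ℝ → ℝ → ℝ → ℝ) (n i : ℕ) (ω : Ω) : ℝ :=
  f (h (W (((i : ℝ) - 1) / n) ω)) (Int.fract (h (W (((i : ℝ) - 1) / n) ω) / α n))
    (Real.sqrt n * (h (W ((i : ℝ) / n) ω) - h (W (((i : ℝ) - 1) / n) ω)))

/-- `η_i^n = f_i^n - M_n f_n(X_{(i-1)/n})`. -/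
def eta (W : ℝ → Ω → ℝ) (h σ : ℝ → ℝ) (α : ℕ → ℝ) (f : ℝ → ℝ → ℝ → ℝ) (n i : ℕ)
    (ω : Ω) : ℝ :=
  fF W h α f n i ω - Mnf σ f n (h (W (((i : ℝ) - 1) / n) ω))

/-- `δ_i^n(f, l)`. -/
def delta (W : ℝ → Ω → ℝ) (h σ : ℝ → ℝ) (α : ℕ → ℝ) (f : ℝ → ℝ → ℝ → ℝ) (n l i : ℕ)
    (ω : Ω) : ℝ :=
  ∑ z ∈ Finset.Icc i (min n (i + l - 1)),
    (MeasureTheory.condExp (filt W ((i : ℝ) / n)) ℙ (eta W h σ α f n z) ω -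
     MeasureTheory.condExp (filt W (((i : ℝ) - 1) / n)) ℙ (eta W h σ α f n z) ω)

/-- `𝓜_{jk}^n(f, l)`. -/
def Mjk (W : ℝ → Ω → ℝ) (h σ : ℝ → ℝ) (α : ℕ → ℝ) (f : ℝ → ℝ → ℝ → ℝ) (n l j k : ℕ)
    (ω : Ω) : ℝ :=
  (2 : ℝ) ^ ((j : ℝ) / 2) / n * ∑ i ∈ Finset.Icc 1 n, ind j k ((i : ℝ) / n) *
    delta W h σ α f n l i ω

/-- `s_{jk} = {2^{-j} n k + 1, …, 2^{-j} n (k+1)}`. -/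
def sjk (n j k : ℕ) : Finset ℕ := Finset.Icc (n / 2 ^ j * k + 1) (n / 2 ^ j * (k + 1))

/-- `H_{jk}^n(f, l)`. -/
def Hjk (W : ℝ → Ω → ℝ) (h σ : ℝ → ℝ) (α : ℕ → ℝ) (f : ℝ → ℝ → ℝ → ℝ) (n l j k : ℕ)
    (ω : Ω) : ℝ :=
  (2 : ℝ) ^ ((j : ℝ) / 2) / n * (∑ i ∈ sjk n j k,
      (mbar σ α f n (h (W ((i : ℝ) / n) ω)) - mbar σ α f n (h (W (((i : ℝ) - 1) / n) ω)))) -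
  (2 : ℝ) ^ ((j : ℝ) / 2) / n * ∑ i ∈ sjk n j k,
      (if 2 ≤ min (n - i) (l - 1) then
        lin σ α f n (min (n - i) (l - 1)) (h (W (((i : ℝ) - 1) / n) ω)) else 0)

/-- `K_{jk}^n(f, l)`. -/
def Kjk (W : ℝ → Ω → ℝ) (h σ : ℝ → ℝ) (α : ℕ → ℝ) (f : ℝ → ℝ → ℝ → ℝ) (n l j k : ℕ)
    (ω : Ω) : ℝ :=
  (2 : ℝ) ^ ((j : ℝ) / 2) / n * ∑ i ∈ sjk n j k, ∑ z ∈ Finset.Icc 1 (min (n - i - 1) (l - 2)),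
    (lin σ α f n z (h (W ((i : ℝ) / n) ω)) - lin σ α f n z (h (W (((i : ℝ) - 1) / n) ω)))

/-- Coefficient `c_{jk}` of `s ↦ g(X_s)σ(X_s)` on the Haar scaling functions. -/
def cjk (W : ℝ → Ω → ℝ) (h σ g : ℝ → ℝ) (j k : ℕ) (ω : Ω) : ℝ :=
  (2 : ℝ) ^ ((j : ℝ) / 2) * ∫ s in (0 : ℝ)..1, ind j k s * (g (h (W s ω)) * σ (h (W s ω)))

/-- Coefficient `d_{jk}` of `s ↦ g(X_s)σ(X_s)` in the Haar basis. -/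
def djk (W : ℝ → Ω → ℝ) (h σ g : ℝ → ℝ) (j k : ℕ) (ω : Ω) : ℝ :=
  ∫ s in (0 : ℝ)..1, psijk j k s * (g (h (W s ω)) * σ (h (W s ω)))

/-- The specific sampling function `f_n(x,u,y) = √(π/2) β_n |⌊u + y/β_n⌋|`. -/
def fSpec (α : ℕ → ℝ) (n : ℕ) (x u y : ℝ) : ℝ :=
  Real.sqrt (π / 2) * beta α n * |(⌊u + y / beta α n⌋ : ℤ)|

/-- `q_i^n = √(π/2) n^{-1/2} |X^{(α_n)}_{i/n} - X^{(α_n)}_{(i-1)/n}|` (case g = 1). -/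
def qin (W : ℝ → Ω → ℝ) (h : ℝ → ℝ) (α : ℕ → ℝ) (n i : ℕ) (ω : Ω) : ℝ :=
  Real.sqrt (π / 2) / Real.sqrt n * |Xr W h α n i ω - Xr W h α n (i - 1) ω|

/-- `z_i^n = q_i^n - ∫_{(i-1)/n}^{i/n} σ(X_s) ds`. -/
def zin (W : ℝ → Ω → ℝ) (h σ : ℝ → ℝ) (α : ℕ → ℝ) (n i : ℕ) (ω : Ω) : ℝ :=
  qin W h α n i ω - ∫ s in (((i : ℝ) - 1) / n)..((i : ℝ) / n), σ (h (W s ω))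

section Theorems

variable {Ω : Type*} [MeasureSpace Ω] [IsProbabilityMeasure (ℙ : Measure Ω)]


/-! ### Auxiliary lemmas for statement7 -/

/-- Cauchy-Schwarz: square of an integral against a finite measure. -/
lemma sq_integral_le_mul (μ : Measure ℝ) [IsFiniteMeasure μ] {g : ℝ → ℝ}
    (h1 : Integrable g μ) (h2 : Integrable (fun x => g x ^ 2) μ) :
    (∫ x, g x ∂μ) ^ 2 ≤ (μ Set.univ).toReal * ∫ x, g x ^ 2 ∂μ := by
  set T := (μ Set.univ).toReal with hT
  have hT0 : 0 ≤ T := ENNReal.toReal_nonneg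
  rcases eq_or_lt_of_le hT0 with h0 | hpos
  · have hμ : μ Set.univ = 0 := by
      rcases (ENNReal.toReal_eq_zero_iff _).mp h0.symm with h | h
      · exact h
      · exact absurd h (measure_ne_top μ _)
    have : μ = 0 := Measure.measure_univ_eq_zero.mp hμ
    simp [this]
  · set I := ∫ x, g x ∂μ with hI
    set S := ∫ x, g x ^ 2 ∂μ with hS
    set c : ℝ := I / T with hc
    have key : 0 ≤ ∫ x, (g x - c) ^ 2 ∂μ := integral_nonneg fun x => sq_nonneg _
    have hexp : (fun x => (g x - c) ^ 2) = fun x => (g x ^ 2 - 2 * c * g x) + c ^ 2 := by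
      funext x; ring
    have hsub : Integrable (fun x => g x ^ 2 - 2 * c * g x) μ := by
      have := h2.sub (h1.const_mul (2 * c))
      exact this
    have hint : ∫ x, (g x - c) ^ 2 ∂μ = (S - 2 * c * I) + c ^ 2 * T := by
      rw [hexp, integral_add hsub (integrable_const _), integral_sub h2 (h1.const_mul _),
        integral_const_mul, integral_const]
      simp [hT, hS, hI, smul_eq_mul, mul_comm, Measure.real]
    rw [hint] at key
    have hTne : T ≠ 0 := ne_of_gt hpos
    have e1 : c ^ 2 * T = I ^ 2 / T := by rw [hc]; field_simp
    have e2 : 2 * c * I = 2 * (I ^ 2 / T) := by rw [hc]; field_simp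
    rw [e1, e2] at key
    have : I ^ 2 / T ≤ S := by linarith
    calc I ^ 2 = I ^ 2 / T * T := by field_simp
    _ ≤ S * T := mul_le_mul_of_nonneg_right this hT0
    _ = T * S := mul_comm _ _

lemma sq_le_two_exp (x : ℝ) : x ^ 2 * rexp (- x ^ 2 / 2) ≤ 2 * rexp (- x ^ 2 / 4) := by
  have h1 : x ^ 2 ≤ 2 * rexp (x ^ 2 / 4) := by
    have he : rexp (x ^ 2 / 4) = rexp (x ^ 2 / 8) * rexp (x ^ 2 / 8) := by
      rw [← Real.exp_add]; congr 1; ring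
    nlinarith [Real.add_one_le_exp (x ^ 2 / 8), sq_nonneg (x ^ 2 / 8 - 1),
      Real.exp_pos (x ^ 2 / 8), sq_nonneg x]
  calc x ^ 2 * rexp (- x ^ 2 / 2) ≤ 2 * rexp (x ^ 2 / 4) * rexp (- x ^ 2 / 2) :=
        mul_le_mul_of_nonneg_right h1 (Real.exp_pos _).le
  _ = 2 * rexp (- x ^ 2 / 4) := by rw [mul_assoc, ← Real.exp_add]; ring_nf

lemma gauss_sq_one : ∫⁻ x, ENNReal.ofReal (x ^ 2) ∂(gaussianReal 0 1) ≠ ∞ := by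
  rw [gaussianReal_of_var_ne_zero 0 one_ne_zero,
    lintegral_withDensity_eq_lintegral_mul _ (measurable_gaussianPDF 0 1)
      (by fun_prop : Measurable fun x : ℝ => ENNReal.ofReal (x ^ 2))]
  have hb : ∀ x : ℝ, (gaussianPDF 0 1 x * ENNReal.ofReal (x ^ 2))
      ≤ ENNReal.ofReal (2 * rexp (-(1/4) * x ^ 2)) := by
    intro x
    rw [gaussianPDF, ← ENNReal.ofReal_mul (gaussianPDFReal_nonneg 0 1 x)]
    apply ENNReal.ofReal_le_ofReal
    have hpdf : gaussianPDFReal 0 1 x ≤ rexp (- x ^ 2 / 2) := by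
      rw [gaussianPDFReal]
      have h1 : (1:ℝ) ≤ √(2 * π * (1:NNReal)) := by
        rw [show ((1:NNReal):ℝ) = (1:ℝ) by norm_num, mul_one]
        rw [show (1:ℝ) = √1 by simp]
        apply Real.sqrt_le_sqrt
        nlinarith [Real.pi_gt_three]
      have h2 : (√(2 * π * (1:NNReal)))⁻¹ ≤ 1 := inv_le_one_of_one_le₀ h1
      calc (√(2 * π * (1:NNReal)))⁻¹ * rexp (-(x - 0) ^ 2 / (2 * (1:NNReal)))
          ≤ 1 * rexp (-(x - 0) ^ 2 / (2 * (1:NNReal))) :=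
            mul_le_mul_of_nonneg_right h2 (Real.exp_pos _).le
      _ = rexp (- x ^ 2 / 2) := by norm_num
    calc gaussianPDFReal 0 1 x * x ^ 2 ≤ rexp (- x ^ 2 / 2) * x ^ 2 :=
          mul_le_mul_of_nonneg_right hpdf (sq_nonneg x)
    _ = x ^ 2 * rexp (- x ^ 2 / 2) := mul_comm _ _
    _ ≤ 2 * rexp (- x ^ 2 / 4) := sq_le_two_exp x
    _ = 2 * rexp (-(1/4) * x ^ 2) := by ring_nf
  simp only [Pi.mul_apply]
  apply ne_of_lt
  calc ∫⁻ x, gaussianPDF 0 1 x * ENNReal.ofReal (x ^ 2)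
      ≤ ∫⁻ x, ENNReal.ofReal (2 * rexp (-(1/4) * x ^ 2)) := lintegral_mono hb
  _ = ENNReal.ofReal (∫ x, 2 * rexp (-(1/4) * x ^ 2)) := by
      rw [ofReal_integral_eq_lintegral_ofReal
        ((integrable_exp_neg_mul_sq (by norm_num : (0:ℝ) < 1/4)).const_mul 2)
        (ae_of_all _ fun x => by positivity)]
  _ < ∞ := ENNReal.ofReal_lt_top

lemma gauss_sq_bound : ∃ M : ℝ, 0 ≤ M ∧ ∀ v : ℝ≥0,
    ∫⁻ x, ENNReal.ofReal (x ^ 2) ∂(gaussianReal 0 v) ≤ ENNReal.ofReal (M * v) := by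
  refine ⟨(∫⁻ x, ENNReal.ofReal (x ^ 2) ∂(gaussianReal 0 1)).toReal, ENNReal.toReal_nonneg, ?_⟩
  intro v
  have hmap : Measure.map (fun x => √(v:ℝ) * x) (gaussianReal 0 1) = gaussianReal 0 v := by
    rw [gaussianReal_map_const_mul]
    congr 1
    · ring
    · ext
      simp [Real.sq_sqrt (v.coe_nonneg)]
  rw [← hmap, lintegral_map (by fun_prop) (measurable_const_mul _)]
  have hsc : ∀ x : ℝ, ENNReal.ofReal ((√(v:ℝ) * x) ^ 2)
      = ENNReal.ofReal (v:ℝ) * ENNReal.ofReal (x ^ 2) := by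
    intro x
    rw [mul_pow, Real.sq_sqrt v.coe_nonneg, ENNReal.ofReal_mul v.coe_nonneg]
  simp_rw [hsc]
  rw [lintegral_const_mul _ (by fun_prop)]
  rw [ENNReal.ofReal_mul ENNReal.toReal_nonneg, ENNReal.ofReal_toReal gauss_sq_one]
  rw [mul_comm]

section grid
variable {n j k m : ℕ} (hn : n = 2 ^ j * m) (hm : 1 ≤ m)
include hn hm

lemma npos : (0:ℝ) < n := by
  have : 0 < n := by rw [hn]; positivity
  exact_mod_cast this

lemma endpt_a : (k:ℝ) / 2 ^ j = ((k * m : ℕ) : ℝ) / n := by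
  have h2 : (0:ℝ) < 2 ^ j := by positivity
  rw [hn]; push_cast
  rw [div_eq_div_iff h2.ne' (by positivity)]
  ring

lemma endpt_b : ((k:ℝ) + 1) / 2 ^ j = (((k + 1) * m : ℕ) : ℝ) / n := by
  have h2 : (0:ℝ) < 2 ^ j := by positivity
  rw [hn]; push_cast
  rw [div_eq_div_iff h2.ne' (by positivity)]
  ring

lemma ind_grid_mem (i : ℕ) :
    (i:ℝ)/n ∈ Set.Ioc ((k : ℝ) / 2 ^ j) (((k : ℝ) + 1) / 2 ^ j) ↔
      k * m < i ∧ i ≤ (k + 1) * m := by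
  rw [endpt_a hn hm, endpt_b hn hm, Set.mem_Ioc,
    div_lt_div_iff_of_pos_right (npos hn hm), div_le_div_iff_of_pos_right (npos hn hm),
    Nat.cast_lt, Nat.cast_le]

lemma ind_grid (i : ℕ) :
    ind j k ((i:ℝ)/n) = if k * m < i ∧ i ≤ (k + 1) * m then 1 else 0 := by
  rw [ind, Set.indicator_apply]
  by_cases hmem : (i:ℝ)/n ∈ Set.Ioc ((k : ℝ) / 2 ^ j) (((k : ℝ) + 1) / 2 ^ j)
  · rw [if_pos hmem, if_pos ((ind_grid_mem hn hm i).mp hmem)]; rfl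
  · rw [if_neg hmem, if_neg (fun h => hmem ((ind_grid_mem hn hm i).mpr h))]

lemma ind_const_on (i : ℕ) (hi : 1 ≤ i) {s : ℝ}
    (hs : s ∈ Set.Ioc (((i:ℝ) - 1)/n) ((i:ℝ)/n)) :
    ind j k s = ind j k ((i:ℝ)/n) := by
  have hn0 := npos hn hm
  obtain ⟨hs1, hs2⟩ := hs
  unfold ind
  rw [endpt_a hn hm, endpt_b hn hm]
  by_cases hmem : (i:ℝ)/n ∈ Set.Ioc (((k * m : ℕ):ℝ)/n) ((((k+1) * m : ℕ):ℝ)/n)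
  · obtain ⟨h1, h2⟩ := hmem
    have hkm : k * m < i := by
      have := (div_lt_div_iff_of_pos_right hn0).mp h1
      exact_mod_cast this
    have hle : ((k * m : ℕ):ℝ) ≤ (i:ℝ) - 1 := by
      have : (k * m : ℕ) + 1 ≤ i := hkm
      have := (Nat.cast_le (α := ℝ)).mpr this
      push_cast at this ⊢; linarith
    have hsm : s ∈ Set.Ioc (((k * m : ℕ):ℝ)/n) ((((k+1) * m : ℕ):ℝ)/n) :=
      ⟨lt_of_le_of_lt ((div_le_div_iff_of_pos_right hn0).mpr hle) hs1, le_trans hs2 h2⟩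
    rw [Set.indicator_of_mem hsm, Set.indicator_of_mem (Set.mem_Ioc.mpr ⟨h1, h2⟩)]
    rfl
  · rw [Set.indicator_of_notMem hmem, Set.indicator_of_notMem]
    intro hsm
    apply hmem
    obtain ⟨h1, h2⟩ := hsm
    constructor
    · exact lt_of_lt_of_le h1 hs2
    · have hlt : ((i:ℝ) - 1)/n < (((k+1) * m : ℕ):ℝ)/n := lt_of_lt_of_le hs1 h2
      have hlt2 : (i:ℝ) - 1 < ((k+1) * m : ℕ) := (div_lt_div_iff_of_pos_right hn0).mp hlt
      have hle : i ≤ (k+1) * m := by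
        have : (i:ℝ) < ((k+1) * m : ℕ) + 1 := by linarith
        exact_mod_cast Nat.lt_succ_iff.mp (by exact_mod_cast this)
      exact (div_le_div_iff_of_pos_right hn0).mpr (by exact_mod_cast hle)

lemma ind_sum_le : ∑ i ∈ Finset.Icc 1 n, ind j k ((i:ℝ)/n) ≤ (m:ℝ) := by
  have hcong : ∀ i ∈ Finset.Icc 1 n, ind j k ((i:ℝ)/n)
      = if k * m < i ∧ i ≤ (k + 1) * m then (1:ℝ) else 0 :=
    fun i _ => ind_grid hn hm i
  rw [Finset.sum_congr rfl hcong, Finset.sum_boole]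
  have hsub : (Finset.Icc 1 n).filter (fun i => k * m < i ∧ i ≤ (k + 1) * m)
      ⊆ Finset.Icc (k * m + 1) ((k + 1) * m) := by
    intro i hi
    simp only [Finset.mem_filter, Finset.mem_Icc] at *
    exact ⟨hi.2.1, hi.2.2⟩
  have hcard0 := Finset.card_le_card hsub
  rw [Nat.card_Icc] at hcard0
  have hcard : ((Finset.Icc 1 n).filter (fun i => k * m < i ∧ i ≤ (k + 1) * m)).card ≤ m := by
    have hd : (k+1) * m = k * m + m := by ring
    omega
  exact_mod_cast hcard

end grid

/-- Lemma 2 (Riemann approximation). -/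
theorem statement7 (W : ℝ → Ω → ℝ) (σ h : ℝ → ℝ) (x₀ : ℝ) (f : ℝ → ℝ)
    (hW : IsStdBM W) (hB : AssumptionBp σ) (hD : IsScaleFun σ x₀ h)
    (hf : ContDiff ℝ 1 f) (hfb : ∃ C, ∀ x, |f x| ≤ C ∧ |deriv f x| ≤ C) :
    ∃ c : ℝ, ∀ n j k : ℕ, 1 ≤ n → 2 ^ j ∣ n → k < 2 ^ j →
      ∫⁻ ω, ENNReal.ofReal
          (((2:ℝ) ^ ((j : ℝ) / 2) / n *
              (∑ i ∈ Finset.Icc 1 n, ind j k ((i : ℝ) / n) * f (h (W ((i : ℝ) / n) ω))) -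
            (2:ℝ) ^ ((j : ℝ) / 2) * ∫ s in (0:ℝ)..1, ind j k s * f (h (W s ω))) ^ 2) ∂ℙ ≤
        ENNReal.ofReal (c * (2:ℝ) ^ (-(j : ℝ)) / n) := by
  classical
  obtain ⟨hWmeas, hW0, hWcont, hWgauss, -⟩ := hW
  obtain ⟨hσC2, ⟨Cσ, hCσ⟩, hσpos⟩ := hB
  obtain ⟨Cf, hCf⟩ := hfb
  obtain ⟨M, hM0, hM⟩ := gauss_sq_bound
  have hh_diff : Differentiable ℝ h := fun x => (hD.2 x).differentiableAt
  have hh_cont : Continuous h := hh_diff.continuous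
  have hf_diff : Differentiable ℝ f := hf.differentiable one_ne_zero
  have hfh_lip : LipschitzWith (Real.toNNReal Cf * Real.toNNReal Cσ) (f ∘ h) := by
    refine LipschitzWith.comp ?_ ?_
    · refine lipschitzWith_of_nnnorm_deriv_le hf_diff fun x => ?_
      have h1 : (‖deriv f x‖₊ : ℝ) ≤ (Real.toNNReal Cf : ℝ) := by
        rw [coe_nnnorm, Real.norm_eq_abs, Real.coe_toNNReal']
        exact le_max_of_le_left (hCf x).2
      exact_mod_cast h1
    · refine lipschitzWith_of_nnnorm_deriv_le hh_diff fun x => ?_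
      have hd : deriv h x = σ (h x) := (hD.2 x).deriv
      have h1 : (‖deriv h x‖₊ : ℝ) ≤ (Real.toNNReal Cσ : ℝ) := by
        rw [coe_nnnorm, Real.norm_eq_abs, Real.coe_toNNReal', hd]
        exact le_max_of_le_left (hCσ (h x)).1
      exact_mod_cast h1
  set L : ℝ := ((Real.toNNReal Cf * Real.toNNReal Cσ : ℝ≥0) : ℝ) with hLdef
  have hL0 : 0 ≤ L := NNReal.coe_nonneg _
  have hΔ : ∀ a b : ℝ, |f (h a) - f (h b)| ≤ L * |a - b| := by
    intro a b
    have := hfh_lip.dist_le_mul a b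
    simpa [Real.dist_eq, Function.comp, hLdef] using this
  refine ⟨L ^ 2 * M, ?_⟩
  intro n j k hn1 hdvd hk
  obtain ⟨m, hm⟩ := hdvd
  have hm1 : 1 ≤ m := by
    by_contra hcon
    push_neg at hcon
    interval_cases m
    · simp at hm; omega
  have hn0 : (0 : ℝ) < n := by exact_mod_cast hn1
  have hncast : (n : ℝ) = (2 : ℝ) ^ j * m := by rw [hm]; push_cast; ring
  set t : ℕ → ℝ := fun p => (p : ℝ) / n with htdef
  have htle : ∀ p : ℕ, t p ≤ t (p + 1) := by
    intro p
    exact (div_le_div_iff_of_pos_right hn0).mpr (by push_cast; linarith)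
  have htdiff : ∀ p : ℕ, t (p + 1) - t p = 1 / n := by
    intro p; simp only [htdef]; push_cast; field_simp; ring
  have ht0 : ∀ p : ℕ, 0 ≤ t p := fun p => div_nonneg (Nat.cast_nonneg p) hn0.le
  set c : ℕ → ℝ := fun i => ind j k ((i : ℝ) / n) with hcdef
  have hc01 : ∀ i, c i = 0 ∨ c i = 1 := by
    intro i
    simp only [hcdef]
    rw [ind_grid hm hm1 i]
    split_ifs
    · right; rfl
    · left; rfl
  have hc0 : ∀ i, 0 ≤ c i := fun i => by rcases hc01 i with hh | hh <;> rw [hh] <;> norm_num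
  have hcsq : ∀ i, c i ^ 2 = c i := fun i => by rcases hc01 i with hh | hh <;> rw [hh] <;> norm_num
  have hcsum : (∑ p ∈ Finset.range n, c (p + 1)) ≤ (m : ℝ) := by
    have hle := ind_sum_le hm hm1 (k := k)
    rw [← Finset.Ico_add_one_right_eq_Icc, Finset.sum_Ico_eq_sum_range] at hle
    have hre : (∑ p ∈ Finset.range (n + 1 - 1), ind j k ((((1 + p):ℕ):ℝ) / n))
        = ∑ p ∈ Finset.range n, c (p + 1) := by
      refine Finset.sum_congr (by rw [Nat.add_sub_cancel]) fun p _ => ?_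
      rw [Nat.add_comm 1 p]
    rw [hre] at hle
    exact hle
  have hgC : ∀ ω, Continuous fun s => f (h (W s ω)) :=
    fun ω => (hf_diff.continuous.comp hh_cont).comp (hWcont ω)
  have hWj : Measurable (Function.uncurry W) :=
    measurable_uncurry_of_continuous_of_measurable hWcont hWmeas
  have hfhm : Measurable fun x => f (h x) := (hf_diff.continuous.comp hh_cont).measurable
  set F : ℕ → Ω → ℝ → ℝ≥0∞ := fun p ω s =>
    ENNReal.ofReal ((f (h (W (t (p + 1)) ω)) - f (h (W s ω))) ^ 2) with hFdef
  have hFmeas : ∀ p, Measurable (Function.uncurry (F p)) := by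
    intro p
    apply Measurable.ennreal_ofReal
    apply Measurable.pow_const
    apply Measurable.sub
    · exact hfhm.comp ((hWmeas _).comp measurable_fst)
    · exact hfhm.comp (hWj.comp (measurable_snd.prodMk measurable_fst))
  set G : ℕ → Ω → ℝ≥0∞ := fun p ω => ∫⁻ s in Set.Ioc (t p) (t (p + 1)), F p ω s with hGdef
  have hGmeas : ∀ p, Measurable (G p) := fun p => (hFmeas p).lintegral_prod_right
  -- pointwise bound
  have pointwise : ∀ ω : Ω,
      ENNReal.ofReal (((2:ℝ) ^ ((j : ℝ) / 2) / n *
          (∑ i ∈ Finset.Icc 1 n, ind j k ((i : ℝ) / n) * f (h (W ((i : ℝ) / n) ω))) -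
        (2:ℝ) ^ ((j : ℝ) / 2) * ∫ s in (0:ℝ)..1, ind j k s * f (h (W s ω))) ^ 2)
      ≤ ∑ p ∈ Finset.range n, ENNReal.ofReal (c (p + 1)) * G p ω := by
    intro ω
    have hgc : Continuous fun s => f (h (W s ω)) := hgC ω
    have hgi : ∀ a b : ℝ, IntervalIntegrable (fun s => f (h (W s ω))) volume a b :=
      fun a b => hgc.intervalIntegrable a b
    have hindg : ∀ a b : ℝ, IntervalIntegrable (fun s => ind j k s * f (h (W s ω))) volume a b := by
      intro a b
      have heq : (fun s => ind j k s * f (h (W s ω)))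
          = Set.indicator (Set.Ioc ((k : ℝ) / 2 ^ j) (((k : ℝ) + 1) / 2 ^ j))
              (fun s => f (h (W s ω))) := by
        funext s
        rw [ind, Set.indicator_apply, Set.indicator_apply]
        split_ifs <;> simp
      rw [heq, intervalIntegrable_iff]
      exact (intervalIntegrable_iff.mp (hgi a b)).indicator measurableSet_Ioc
    have h1n : t n = 1 := by simp only [htdef]; field_simp
    have h00 : t 0 = 0 := by simp [htdef]
    have hsplit : (∫ s in (0:ℝ)..1, ind j k s * f (h (W s ω)))
        = ∑ p ∈ Finset.range n, ∫ s in t p..t (p + 1), ind j k s * f (h (W s ω)) := by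
      rw [intervalIntegral.sum_integral_adjacent_intervals
        (fun p _ => hindg (t p) (t (p + 1))), h00, h1n]
    have hstep : ∀ p : ℕ, (∫ s in t p..t (p + 1), ind j k s * f (h (W s ω)))
        = c (p + 1) * ∫ s in t p..t (p + 1), f (h (W s ω)) := by
      intro p
      rw [intervalIntegral.integral_of_le (htle p), intervalIntegral.integral_of_le (htle p),
        ← integral_const_mul]
      apply setIntegral_congr_fun measurableSet_Ioc
      intro s hs
      have hs' : s ∈ Set.Ioc ((((p + 1 : ℕ) : ℝ) - 1) / n) (((p + 1 : ℕ) : ℝ) / n) := by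
        have e1 : (((p + 1 : ℕ) : ℝ) - 1) / (n:ℝ) = t p := by
          simp only [htdef]; push_cast; ring
        have e2 : ((p + 1 : ℕ) : ℝ) / (n:ℝ) = t (p + 1) := rfl
        rw [e1, e2]; exact hs
      have hind := ind_const_on (k := k) hm hm1 (p + 1) (Nat.le_add_left 1 p) hs'
      simp only [hcdef]
      rw [hind]
    have hsum1 : (∑ i ∈ Finset.Icc 1 n, ind j k ((i : ℝ) / n) * f (h (W ((i : ℝ) / n) ω)))
        = ∑ p ∈ Finset.range n, c (p + 1) * f (h (W (t (p + 1)) ω)) := by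
      rw [← Finset.Ico_add_one_right_eq_Icc, Finset.sum_Ico_eq_sum_range]
      refine Finset.sum_congr (by simp) fun p _ => ?_
      rw [Nat.add_comm 1 p]
    set D : ℕ → ℝ := fun p =>
      1 / (n:ℝ) * f (h (W (t (p + 1)) ω)) - ∫ s in t p..t (p + 1), f (h (W s ω)) with hDdef
    have hA : ((2:ℝ) ^ ((j : ℝ) / 2) / n *
          (∑ i ∈ Finset.Icc 1 n, ind j k ((i : ℝ) / n) * f (h (W ((i : ℝ) / n) ω))) -
        (2:ℝ) ^ ((j : ℝ) / 2) * ∫ s in (0:ℝ)..1, ind j k s * f (h (W s ω)))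
        = (2:ℝ) ^ ((j : ℝ) / 2) * ∑ p ∈ Finset.range n, c (p + 1) * D p := by
      rw [hsum1, hsplit, Finset.sum_congr rfl fun p _ => hstep p, Finset.mul_sum,
        Finset.mul_sum, Finset.mul_sum, ← Finset.sum_sub_distrib]
      refine Finset.sum_congr rfl fun p _ => ?_
      simp only [hDdef]
      ring
    have hJnn : ∀ p : ℕ,
        0 ≤ ∫ s in Set.Ioc (t p) (t (p + 1)), (f (h (W (t (p + 1)) ω)) - f (h (W s ω))) ^ 2 :=
      fun p => setIntegral_nonneg measurableSet_Ioc fun s _ => sq_nonneg _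
    have hDp : ∀ p : ℕ, D p ^ 2 ≤ (1 / (n:ℝ)) *
        ∫ s in Set.Ioc (t p) (t (p + 1)), (f (h (W (t (p + 1)) ω)) - f (h (W s ω))) ^ 2 := by
      intro p
      have hDalt : D p
          = ∫ s in Set.Ioc (t p) (t (p + 1)), (f (h (W (t (p + 1)) ω)) - f (h (W s ω))) := by
        simp only [hDdef]
        rw [← intervalIntegral.integral_of_le (htle p),
          intervalIntegral.integral_sub (intervalIntegrable_const) (hgi _ _),
          intervalIntegral.integral_const, htdiff p, smul_eq_mul]
      haveI : IsFiniteMeasure (volume.restrict (Set.Ioc (t p) (t (p + 1)))) := by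
        constructor
        rw [Measure.restrict_apply_univ, Real.volume_Ioc]
        exact ENNReal.ofReal_lt_top
      have hcont1 : Continuous fun s => f (h (W (t (p + 1)) ω)) - f (h (W s ω)) :=
        continuous_const.sub hgc
      have h2 := sq_integral_le_mul (volume.restrict (Set.Ioc (t p) (t (p + 1))))
        (g := fun s => f (h (W (t (p + 1)) ω)) - f (h (W s ω)))
        (hcont1.integrableOn_Ioc) ((hcont1.pow 2).integrableOn_Ioc)
      rw [Measure.restrict_apply_univ, Real.volume_Ioc, htdiff p,
        ENNReal.toReal_ofReal (by positivity)] at h2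
      rw [hDalt]
      exact h2
    have hCS : (∑ p ∈ Finset.range n, c (p + 1) * D p) ^ 2
        ≤ (m:ℝ) * ∑ p ∈ Finset.range n, c (p + 1) * D p ^ 2 := by
      have h1 := Finset.sum_mul_sq_le_sq_mul_sq (Finset.range n)
        (fun p => c (p + 1)) (fun p => c (p + 1) * D p)
      have e1 : (∑ p ∈ Finset.range n, c (p + 1) * (c (p + 1) * D p))
          = ∑ p ∈ Finset.range n, c (p + 1) * D p :=
        Finset.sum_congr rfl fun p _ => by rw [← mul_assoc, ← sq, hcsq]
      have e2 : (∑ p ∈ Finset.range n, c (p + 1) ^ 2) = ∑ p ∈ Finset.range n, c (p + 1) :=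
        Finset.sum_congr rfl fun p _ => hcsq _
      have e3 : (∑ p ∈ Finset.range n, (c (p + 1) * D p) ^ 2)
          = ∑ p ∈ Finset.range n, c (p + 1) * D p ^ 2 :=
        Finset.sum_congr rfl fun p _ => by rw [mul_pow, hcsq]
      rw [e1, e2, e3] at h1
      refine h1.trans (mul_le_mul_of_nonneg_right hcsum ?_)
      exact Finset.sum_nonneg fun p _ => mul_nonneg (hc0 _) (sq_nonneg _)
    have h2j : ((2:ℝ) ^ ((j : ℝ) / 2)) ^ 2 = (2:ℝ) ^ j := by
      have e : ((2:ℝ) ^ ((j : ℝ) / 2)) ^ 2 = (2:ℝ) ^ ((j:ℝ) / 2 * 2) := by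
        rw [← Real.rpow_natCast ((2:ℝ) ^ ((j:ℝ)/2)) 2,
          ← Real.rpow_mul (by norm_num : (0:ℝ) ≤ 2)]
        norm_num
      rw [e, div_mul_cancel₀ _ (by norm_num : (2:ℝ) ≠ 0), Real.rpow_natCast]
    have hreal : ((2:ℝ) ^ ((j : ℝ) / 2) / n *
          (∑ i ∈ Finset.Icc 1 n, ind j k ((i : ℝ) / n) * f (h (W ((i : ℝ) / n) ω))) -
        (2:ℝ) ^ ((j : ℝ) / 2) * ∫ s in (0:ℝ)..1, ind j k s * f (h (W s ω))) ^ 2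
        ≤ ∑ p ∈ Finset.range n, c (p + 1) *
            ∫ s in Set.Ioc (t p) (t (p + 1)), (f (h (W (t (p + 1)) ω)) - f (h (W s ω))) ^ 2 := by
      rw [hA, mul_pow, h2j]
      have hsum2 : (∑ p ∈ Finset.range n, c (p + 1) * D p ^ 2)
          ≤ (1 / (n:ℝ)) * ∑ p ∈ Finset.range n, c (p + 1) *
              ∫ s in Set.Ioc (t p) (t (p + 1)),
                (f (h (W (t (p + 1)) ω)) - f (h (W s ω))) ^ 2 := by
        rw [Finset.mul_sum]
        refine Finset.sum_le_sum fun p _ => ?_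
        calc c (p + 1) * D p ^ 2
            ≤ c (p + 1) * ((1 / (n:ℝ)) *
              ∫ s in Set.Ioc (t p) (t (p + 1)),
                (f (h (W (t (p + 1)) ω)) - f (h (W s ω))) ^ 2) :=
              mul_le_mul_of_nonneg_left (hDp p) (hc0 _)
        _ = 1 / (n:ℝ) * (c (p + 1) *
              ∫ s in Set.Ioc (t p) (t (p + 1)),
                (f (h (W (t (p + 1)) ω)) - f (h (W s ω))) ^ 2) := by ring
      set T := ∑ p ∈ Finset.range n, c (p + 1) *
          ∫ s in Set.Ioc (t p) (t (p + 1)),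
            (f (h (W (t (p + 1)) ω)) - f (h (W s ω))) ^ 2 with hTdef
      have hT0 : 0 ≤ T :=
        Finset.sum_nonneg fun p _ => mul_nonneg (hc0 _) (hJnn p)
      calc (2:ℝ) ^ j * (∑ p ∈ Finset.range n, c (p + 1) * D p) ^ 2
          ≤ (2:ℝ) ^ j * ((m:ℝ) * ∑ p ∈ Finset.range n, c (p + 1) * D p ^ 2) :=
            mul_le_mul_of_nonneg_left hCS (by positivity)
      _ ≤ (2:ℝ) ^ j * ((m:ℝ) * (1 / (n:ℝ) * T)) := by
            refine mul_le_mul_of_nonneg_left (mul_le_mul_of_nonneg_left hsum2 ?_) ?_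
            · positivity
            · positivity
      _ = ((2:ℝ) ^ j * (m:ℝ)) / n * T := by ring
      _ = T := by rw [← hncast, div_self hn0.ne', one_mul]
    calc ENNReal.ofReal (((2:ℝ) ^ ((j : ℝ) / 2) / n *
          (∑ i ∈ Finset.Icc 1 n, ind j k ((i : ℝ) / n) * f (h (W ((i : ℝ) / n) ω))) -
        (2:ℝ) ^ ((j : ℝ) / 2) * ∫ s in (0:ℝ)..1, ind j k s * f (h (W s ω))) ^ 2)
        ≤ ENNReal.ofReal (∑ p ∈ Finset.range n, c (p + 1) *
            ∫ s in Set.Ioc (t p) (t (p + 1)),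
              (f (h (W (t (p + 1)) ω)) - f (h (W s ω))) ^ 2) :=
          ENNReal.ofReal_le_ofReal hreal
    _ = ∑ p ∈ Finset.range n, ENNReal.ofReal (c (p + 1) *
            ∫ s in Set.Ioc (t p) (t (p + 1)),
              (f (h (W (t (p + 1)) ω)) - f (h (W s ω))) ^ 2) :=
          ENNReal.ofReal_sum_of_nonneg fun p _ => mul_nonneg (hc0 _) (hJnn p)
    _ = ∑ p ∈ Finset.range n, ENNReal.ofReal (c (p + 1)) * G p ω := by
          refine Finset.sum_congr rfl fun p _ => ?_
          rw [ENNReal.ofReal_mul (hc0 _)]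
          congr 1
          simp only [hGdef, hFdef]
          have hcs : Continuous fun s => (f (h (W (t (p + 1)) ω)) - f (h (W s ω))) ^ 2 :=
            (continuous_const.sub hgc).pow 2
          rw [ofReal_integral_eq_lintegral_ofReal
            (hcs.integrableOn_Ioc)
            (ae_of_all _ fun s => sq_nonneg _)]
  -- main chain
  calc ∫⁻ ω, ENNReal.ofReal (((2:ℝ) ^ ((j : ℝ) / 2) / n *
          (∑ i ∈ Finset.Icc 1 n, ind j k ((i : ℝ) / n) * f (h (W ((i : ℝ) / n) ω))) -
        (2:ℝ) ^ ((j : ℝ) / 2) * ∫ s in (0:ℝ)..1, ind j k s * f (h (W s ω))) ^ 2) ∂ℙ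
      ≤ ∫⁻ ω, ∑ p ∈ Finset.range n, ENNReal.ofReal (c (p + 1)) * G p ω ∂ℙ :=
        lintegral_mono pointwise
  _ = ∑ p ∈ Finset.range n, ∫⁻ ω, ENNReal.ofReal (c (p + 1)) * G p ω ∂ℙ :=
        lintegral_finset_sum _ fun p _ => (hGmeas p).const_mul _
  _ = ∑ p ∈ Finset.range n, ENNReal.ofReal (c (p + 1)) * ∫⁻ ω, G p ω ∂ℙ := by
        refine Finset.sum_congr rfl fun p _ => ?_
        exact lintegral_const_mul _ (hGmeas p)
  _ ≤ ∑ p ∈ Finset.range n, ENNReal.ofReal (c (p + 1)) *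
        (ENNReal.ofReal (L ^ 2 * M / n) * ENNReal.ofReal (1 / (n:ℝ))) := by
        refine Finset.sum_le_sum fun p hp => mul_le_mul_right ?_ _
        have hswap : ∫⁻ ω, G p ω ∂ℙ
            = ∫⁻ s in Set.Ioc (t p) (t (p + 1)), ∫⁻ ω, F p ω s ∂ℙ := by
          simp only [hGdef]
          exact lintegral_lintegral_swap (hFmeas p).aemeasurable
        rw [hswap]
        have hinner : ∀ s ∈ Set.Ioc (t p) (t (p + 1)),
            (∫⁻ ω, F p ω s ∂ℙ) ≤ ENNReal.ofReal (L ^ 2 * M / n) := by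
          intro s hs
          have hs0 : 0 ≤ s := le_of_lt (lt_of_le_of_lt (ht0 p) hs.1)
          have hst : s ≤ t (p + 1) := hs.2
          have hWsub : Measurable fun ω => W (t (p + 1)) ω - W s ω :=
            (hWmeas _).sub (hWmeas _)
          calc ∫⁻ ω, F p ω s ∂ℙ
              ≤ ∫⁻ ω, ENNReal.ofReal (L ^ 2) *
                  ENNReal.ofReal ((W (t (p + 1)) ω - W s ω) ^ 2) ∂ℙ := by
                refine lintegral_mono fun ω => ?_
                simp only [hFdef]
                rw [← ENNReal.ofReal_mul (by positivity)]
                apply ENNReal.ofReal_le_ofReal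
                calc (f (h (W (t (p + 1)) ω)) - f (h (W s ω))) ^ 2
                    = |f (h (W (t (p + 1)) ω)) - f (h (W s ω))| ^ 2 := (sq_abs _).symm
                _ ≤ (L * |W (t (p + 1)) ω - W s ω|) ^ 2 :=
                    pow_le_pow_left₀ (abs_nonneg _) (hΔ _ _) 2
                _ = L ^ 2 * (W (t (p + 1)) ω - W s ω) ^ 2 := by rw [mul_pow, sq_abs]
          _ = ENNReal.ofReal (L ^ 2) *
                ∫⁻ ω, ENNReal.ofReal ((W (t (p + 1)) ω - W s ω) ^ 2) ∂ℙ :=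
                lintegral_const_mul _ (hWsub.pow_const 2).ennreal_ofReal
          _ = ENNReal.ofReal (L ^ 2) * ∫⁻ x, ENNReal.ofReal (x ^ 2)
                ∂(Measure.map (fun ω => W (t (p + 1)) ω - W s ω) ℙ) := by
                rw [lintegral_map (by fun_prop) hWsub]
          _ = ENNReal.ofReal (L ^ 2) * ∫⁻ x, ENNReal.ofReal (x ^ 2)
                ∂(gaussianReal 0 (Real.toNNReal (t (p + 1) - s))) := by
                rw [hWgauss s (t (p + 1)) hs0 hst]
          _ ≤ ENNReal.ofReal (L ^ 2) *
                ENNReal.ofReal (M * (Real.toNNReal (t (p + 1) - s) : ℝ)) :=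
                mul_le_mul_right (hM _) _
          _ ≤ ENNReal.ofReal (L ^ 2) * ENNReal.ofReal (M * (1 / n)) := by
                refine mul_le_mul_right (ENNReal.ofReal_le_ofReal ?_) _
                refine mul_le_mul_of_nonneg_left ?_ hM0
                rw [Real.coe_toNNReal']
                apply max_le
                · have h1 := hs.1
                  have h2 := htdiff p
                  linarith
                · positivity
          _ = ENNReal.ofReal (L ^ 2 * M / n) := by
                rw [← ENNReal.ofReal_mul (by positivity)]
                ring_nf
        calc ∫⁻ s in Set.Ioc (t p) (t (p + 1)), ∫⁻ ω, F p ω s ∂ℙ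
            ≤ ∫⁻ _ in Set.Ioc (t p) (t (p + 1)), ENNReal.ofReal (L ^ 2 * M / n) :=
              setLIntegral_mono measurable_const hinner
        _ = ENNReal.ofReal (L ^ 2 * M / n) * volume (Set.Ioc (t p) (t (p + 1))) := by
              rw [setLIntegral_const]
        _ = ENNReal.ofReal (L ^ 2 * M / n) * ENNReal.ofReal (1 / (n:ℝ)) := by
              rw [Real.volume_Ioc, htdiff p]
  _ = (∑ p ∈ Finset.range n, ENNReal.ofReal (c (p + 1))) *
        (ENNReal.ofReal (L ^ 2 * M / n) * ENNReal.ofReal (1 / (n:ℝ))) := by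
        rw [← Finset.sum_mul]
  _ ≤ ENNReal.ofReal (m:ℝ) * ENNReal.ofReal (L ^ 2 * M / n * (1 / (n:ℝ))) := by
        refine mul_le_mul' ?_ ?_
        · rw [← ENNReal.ofReal_sum_of_nonneg fun p _ => hc0 _]
          exact ENNReal.ofReal_le_ofReal hcsum
        · exact (ENNReal.ofReal_mul (by positivity)).symm.le
  _ = ENNReal.ofReal ((m:ℝ) * (L ^ 2 * M / n * (1 / (n:ℝ)))) :=
        (ENNReal.ofReal_mul (Nat.cast_nonneg m)).symm
  _ ≤ ENNReal.ofReal (L ^ 2 * M * (2:ℝ) ^ (-(j : ℝ)) / n) := by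
        apply ENNReal.ofReal_le_ofReal
        apply le_of_eq
        have h2negj : (2:ℝ) ^ (-(j:ℝ)) = ((2:ℝ) ^ j)⁻¹ := by
          rw [Real.rpow_neg (by norm_num : (0:ℝ) ≤ 2), Real.rpow_natCast]
        have hmne : (m:ℝ) ≠ 0 := by positivity
        have h2ne : ((2:ℝ) ^ j) ≠ 0 := by positivity
        rw [h2negj, hncast]
        field_simp


end Theorems

end RoundOff
end
end

section
/- (Lemma 5.) Under Assumptions B', C' and D, there is a constant c, not depending on j, j₀, k, such that for all j₀, j ≥ 0 and all admissible k: c_{j₀k}² ≤ c·2^{-j₀} and E[d_{jk}²] ≤ c·2^{-2j}, where c_{j₀k} = 2^{j₀/2}∫₀¹ 1_{j₀k}(s) g(X_s)σ(X_s) ds and d_{jk} = ∫₀¹ ψ_{jk}(s) g(X_s)σ(X_s) ds. -/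
open MeasureTheory ProbabilityTheory Real Filter
open scoped ENNReal NNReal

noncomputable section

namespace RoundOff

variable {Ω : Type*} [MeasureSpace Ω]

/-! ### Auxiliary lemmas for Lemma 5 -/

section Aux5

lemma ennreal_rpow_half_sq (A : ℝ≥0∞) : (A ^ ((1:ℝ)/2)) ^ 2 = A := by
  rw [← ENNReal.rpow_natCast (A ^ ((1:ℝ)/2)) 2, ← ENNReal.rpow_mul]
  norm_num

/-- Cauchy–Schwarz for lintegrals: `(∫⁻ f)² ≤ (∫⁻ f²) * μ univ`. -/
lemma lintegral_sq_le_aux {α : Type*} [MeasurableSpace α] (μ : Measure α) (f : α → ℝ≥0∞)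
    (hf : AEMeasurable f μ) :
    (∫⁻ a, f a ∂μ) ^ 2 ≤ (∫⁻ a, (f a) ^ 2 ∂μ) * μ Set.univ := by
  have hpq : Real.HolderConjugate 2 2 := by rw [Real.holderConjugate_iff]; norm_num
  have H := ENNReal.lintegral_mul_le_Lp_mul_Lq μ hpq hf aemeasurable_const (g := fun _ => 1)
  simp only [Pi.mul_apply, mul_one, lintegral_const, one_mul, ENNReal.one_rpow] at H
  calc (∫⁻ a, f a ∂μ) ^ 2
      ≤ ((∫⁻ a, f a ^ (2:ℝ) ∂μ) ^ ((1:ℝ)/2) * (μ Set.univ) ^ ((1:ℝ)/2)) ^ 2 :=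
        pow_le_pow_left' H 2
    _ = (∫⁻ a, (f a) ^ 2 ∂μ) * μ Set.univ := by
        rw [mul_pow, ennreal_rpow_half_sq, ennreal_rpow_half_sq]
        congr 1
        refine lintegral_congr fun a => ?_
        rw [← ENNReal.rpow_natCast (f a) 2]
        norm_num

lemma integrable_pdf_mul_sq : Integrable (fun x : ℝ => gaussianPDFReal 0 1 x * x ^ 2) := by
  have h := (integrable_rpow_mul_exp_neg_mul_sq (b := 1/2) one_half_pos
    (s := 2) (by norm_num)).const_mul ((√(2 * π))⁻¹)
  refine h.congr (Filter.Eventually.of_forall fun x => ?_)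
  show (√(2 * π))⁻¹ * (x ^ (2:ℝ) * rexp (-(1/2) * x ^ 2)) = gaussianPDFReal 0 1 x * x ^ 2
  rw [Real.rpow_two]
  simp only [gaussianPDFReal, NNReal.coe_one, mul_one, sub_zero]
  rw [show -((1:ℝ)/2) * x ^ 2 = -x ^ 2 / 2 by ring]
  ring

lemma gaussian_snd_moment_lt_top :
    ∫⁻ x, ENNReal.ofReal (x ^ 2) ∂(gaussianReal 0 1) < ∞ := by
  rw [gaussianReal_of_var_ne_zero 0 one_ne_zero,
    lintegral_withDensity_eq_lintegral_mul _ (measurable_gaussianPDF 0 1)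
      (by fun_prop)]
  have heq : ∀ x : ℝ, (gaussianPDF 0 1 * fun x => ENNReal.ofReal (x ^ 2)) x
      = ENNReal.ofReal (gaussianPDFReal 0 1 x * x ^ 2) := by
    intro x
    simp only [Pi.mul_apply, gaussianPDF]
    rw [← ENNReal.ofReal_mul (gaussianPDFReal_nonneg 0 1 x)]
  rw [lintegral_congr heq]
  rw [← hasFiniteIntegral_iff_ofReal (Filter.Eventually.of_forall fun x =>
    mul_nonneg (gaussianPDFReal_nonneg 0 1 x) (sq_nonneg x))]
  exact integrable_pdf_mul_sq.hasFiniteIntegral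

lemma gaussianReal_eq_map (v : ℝ≥0) :
    gaussianReal 0 v = (gaussianReal 0 1).map (fun x => √(v:ℝ) * x) := by
  rw [show (fun x : ℝ => √(v:ℝ) * x) = (√(v:ℝ) * ·) from rfl, gaussianReal_map_const_mul]
  congr 1
  · simp
  · ext
    simp [Real.sq_sqrt v.coe_nonneg]

lemma lintegral_sq_gaussianReal (v : ℝ≥0) :
    ∫⁻ x, ENNReal.ofReal (x ^ 2) ∂(gaussianReal 0 v)
      = (v : ℝ≥0∞) * ∫⁻ x, ENNReal.ofReal (x ^ 2) ∂(gaussianReal 0 1) := by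
  rw [gaussianReal_eq_map v, lintegral_map (by fun_prop) (by fun_prop)]
  rw [← lintegral_const_mul _ (by fun_prop)]
  refine lintegral_congr fun x => ?_
  rw [mul_pow, Real.sq_sqrt v.coe_nonneg, ENNReal.ofReal_mul v.coe_nonneg,
    ENNReal.ofReal_coe_nnreal]

/-- Boundedness and Lipschitz property of `w ↦ g (h w) * σ (h w)`. -/
lemma phi_bound_lipschitz {σ g h : ℝ → ℝ} {x₀ : ℝ}
    (hB : AssumptionBp σ) (hC : AssumptionCp g) (hD : IsScaleFun σ x₀ h) :
    ∃ M L : ℝ, 0 ≤ M ∧ 0 ≤ L ∧ (∀ w : ℝ, |g (h w) * σ (h w)| ≤ M) ∧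
      ∀ a b : ℝ, |g (h a) * σ (h a) - g (h b) * σ (h b)| ≤ L * |a - b| := by
  obtain ⟨hσC, ⟨Cσ, hCσ⟩, c₀, hc₀, hσpos⟩ := hB
  obtain ⟨hgC, ⟨Cg, hCg⟩, c₁, hc₁, hgpos⟩ := hC
  have hCσ0 : 0 ≤ Cσ := le_trans (abs_nonneg _) (hCσ 0).1
  have hCg0 : 0 ≤ Cg := le_trans (abs_nonneg _) (hCg 0).1
  have hgd : Differentiable ℝ g := hgC.differentiable (by norm_num)
  have hσd : Differentiable ℝ σ := hσC.differentiable (by norm_num)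
  set φ : ℝ → ℝ := fun w => g (h w) * σ (h w) with hφ
  have hder : ∀ w, HasDerivAt φ
      ((deriv g (h w) * σ (h w) + g (h w) * deriv σ (h w)) * σ (h w)) w := by
    intro w
    have h1 : HasDerivAt (fun y => g y * σ y)
        (deriv g (h w) * σ (h w) + g (h w) * deriv σ (h w)) (h w) :=
      ((hgd (h w)).hasDerivAt).mul ((hσd (h w)).hasDerivAt)
    exact h1.comp w (hD.2 w)
  set L : ℝ := 2 * Cg * Cσ ^ 2 with hL
  have hL0 : 0 ≤ L := by positivity
  have hdbound : ∀ w, |deriv φ w| ≤ L := by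
    intro w
    rw [(hder w).deriv]
    calc |(deriv g (h w) * σ (h w) + g (h w) * deriv σ (h w)) * σ (h w)|
        = |deriv g (h w) * σ (h w) + g (h w) * deriv σ (h w)| * |σ (h w)| := abs_mul _ _
      _ ≤ (|deriv g (h w)| * |σ (h w)| + |g (h w)| * |deriv σ (h w)|) * |σ (h w)| := by
          have := abs_add_le (deriv g (h w) * σ (h w)) (g (h w) * deriv σ (h w))
          rw [abs_mul, abs_mul] at this
          exact mul_le_mul_of_nonneg_right this (abs_nonneg _)
      _ ≤ (Cg * Cσ + Cg * Cσ) * Cσ := by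
          have h1 := (hCg (h w)).1; have h2 := (hCg (h w)).2.1
          have h3 := (hCσ (h w)).1; have h4 := (hCσ (h w)).2.1
          gcongr <;> first | exact h1 | exact h2 | exact h3 | exact h4 | positivity
      _ = L := by ring
  have hlip : LipschitzWith L.toNNReal φ := by
    refine lipschitzWith_of_nnnorm_deriv_le (fun w => (hder w).differentiableAt) fun w => ?_
    rw [← NNReal.coe_le_coe, coe_nnnorm, Real.norm_eq_abs, Real.coe_toNNReal _ hL0]
    exact hdbound w
  refine ⟨Cg * Cσ, L, by positivity, hL0, fun w => ?_, fun a b => ?_⟩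
  · rw [abs_mul]
    exact mul_le_mul (hCg (h w)).1 (hCσ (h w)).1 (abs_nonneg _) hCg0
  · have := hlip.dist_le_mul a b
    rwa [Real.dist_eq, Real.dist_eq, Real.coe_toNNReal _ hL0] at this


lemma djk_abs_le {Ω : Type*} [MeasureSpace Ω] (W : ℝ → Ω → ℝ) (σ g h : ℝ → ℝ)
    (hWcont : ∀ ω, Continuous fun t => W t ω)
    (hh : Continuous h) (hσc : Continuous σ) (hgc : Continuous g)
    (L : ℝ)
    (hLip : ∀ a b : ℝ, |g (h a) * σ (h a) - g (h b) * σ (h b)| ≤ L * |a - b|)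
    (j k : ℕ) (hk : k < 2 ^ j) (ω : Ω) :
    |djk W h σ g j k ω| ≤ (2:ℝ) ^ ((j:ℝ)/2) *
      (L * ∫ s in Set.Ioc ((k:ℝ)/2^j) (((k:ℝ)+1)/2^j), |W s ω - W ((k:ℝ)/2^j) ω|) := by
  have hp : (0:ℝ) < 2 ^ j := by positivity
  set a : ℝ := (k:ℝ) / 2 ^ j with ha
  set b : ℝ := ((k:ℝ) + 1) / 2 ^ j with hb
  set md : ℝ := ((k:ℝ) + 1/2) / 2 ^ j with hmd
  have hb1 : b ≤ 1 := by
    rw [hb, div_le_one hp]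
    exact_mod_cast Nat.succ_le_of_lt hk
  have ha0 : 0 ≤ a := by positivity
  have ham : a ≤ md := by rw [ha, hmd, div_le_div_iff_of_pos_right hp]; linarith
  have hmb : md ≤ b := by rw [hmd, hb, div_le_div_iff_of_pos_right hp]; linarith
  have hm0 : 0 ≤ md := le_trans ha0 ham
  have hm1 : md ≤ 1 := le_trans hmb hb1
  have hbm : b - md = md - a := by rw [ha, hb, hmd]; ring
  set F : ℝ → ℝ := fun s => g (h (W s ω)) * σ (h (W s ω)) with hF
  have hWc : Continuous fun s => W s ω := hWcont ω
  have hFc : Continuous F := (hgc.comp (hh.comp hWc)).mul (hσc.comp (hh.comp hWc))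
  have hpsirw : ∀ s, psijk j k s * F s
      = (2:ℝ) ^ ((j:ℝ)/2) *
        (Set.indicator (Set.Ioc md b) F s - Set.indicator (Set.Icc a md) F s) := by
    intro s
    have hmem1 : (2:ℝ) ^ j * s - k ∈ Set.Ioc (1/2:ℝ) 1 ↔ s ∈ Set.Ioc md b := by
      simp only [Set.mem_Ioc]
      rw [hmd, hb, div_lt_iff₀ hp, le_div_iff₀ hp]
      constructor
      · rintro ⟨h1, h2⟩; constructor <;> nlinarith
      · rintro ⟨h1, h2⟩; constructor <;> nlinarith
    have hmem2 : (2:ℝ) ^ j * s - k ∈ Set.Icc (0:ℝ) (1/2) ↔ s ∈ Set.Icc a md := by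
      simp only [Set.mem_Icc]
      rw [ha, hmd, div_le_iff₀ hp, le_div_iff₀ hp]
      constructor
      · rintro ⟨h1, h2⟩; constructor <;> nlinarith
      · rintro ⟨h1, h2⟩; constructor <;> nlinarith
    rw [psijk, psi]
    simp only [Set.indicator_apply, hmem1, hmem2, Pi.one_apply]
    split_ifs <;> ring
  have hint1 : IntegrableOn F (Set.Ioc md b) := hFc.integrableOn_Ioc
  have hint2 : IntegrableOn F (Set.Icc a md) := hFc.integrableOn_Icc
  have hint3 : IntegrableOn F (Set.Ioc a md) := hFc.integrableOn_Ioc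
  have hIi1 : IntervalIntegrable (Set.indicator (Set.Ioc md b) F) volume 0 1 :=
    (hint1.integrable_indicator measurableSet_Ioc).intervalIntegrable
  have hIi2 : IntervalIntegrable (Set.indicator (Set.Icc a md) F) volume 0 1 :=
    (hint2.integrable_indicator measurableSet_Icc).intervalIntegrable
  have hdjk : djk W h σ g j k ω
      = (2:ℝ) ^ ((j:ℝ)/2) *
        ((∫ s in Set.Ioc md b, F s) - ∫ s in Set.Ioc a md, F s) := by
    rw [djk]
    rw [intervalIntegral.integral_congr (g :=
      fun s => (2:ℝ) ^ ((j:ℝ)/2) *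
        (Set.indicator (Set.Ioc md b) F s - Set.indicator (Set.Icc a md) F s))
      (fun s _ => hpsirw s)]
    rw [intervalIntegral.integral_const_mul]
    congr 1
    rw [intervalIntegral.integral_sub hIi1 hIi2]
    rw [intervalIntegral.integral_of_le zero_le_one,
      intervalIntegral.integral_of_le zero_le_one,
      setIntegral_indicator measurableSet_Ioc, setIntegral_indicator measurableSet_Icc]
    congr 1
    · rw [Set.inter_eq_self_of_subset_right (Set.Ioc_subset_Ioc hm0 hb1)]
    · apply setIntegral_congr_set
      have h1 : (Set.Icc a md : Set ℝ) =ᵐ[volume] Set.Ioc a md := Ioc_ae_eq_Icc.symm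
      exact (((ae_eq_refl (Set.Ioc (0:ℝ) 1)).inter h1).trans
        (Set.inter_eq_self_of_subset_right (Set.Ioc_subset_Ioc ha0 hm1)).eventuallyEq)
  have hconst1 : IntegrableOn (fun _ : ℝ => F a) (Set.Ioc md b) :=
    integrableOn_const measure_Ioc_lt_top.ne
  have hconst2 : IntegrableOn (fun _ : ℝ => F a) (Set.Ioc a md) :=
    integrableOn_const measure_Ioc_lt_top.ne
  have hsub : (∫ s in Set.Ioc md b, F s) - ∫ s in Set.Ioc a md, F s
      = (∫ s in Set.Ioc md b, (F s - F a)) - ∫ s in Set.Ioc a md, (F s - F a) := by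
    rw [integral_sub hint1 hconst1, integral_sub hint3 hconst2,
      setIntegral_const, setIntegral_const, Real.volume_real_Ioc_of_le hmb,
      Real.volume_real_Ioc_of_le ham,
      smul_eq_mul, smul_eq_mul, hbm]
    ring
  have hintabs1 : IntegrableOn (fun s => |F s - F a|) (Set.Ioc md b) :=
    ((hFc.sub continuous_const).abs).integrableOn_Ioc
  have hintabs2 : IntegrableOn (fun s => |F s - F a|) (Set.Ioc a md) :=
    ((hFc.sub continuous_const).abs).integrableOn_Ioc
  have e1 : |∫ s in Set.Ioc md b, (F s - F a)| ≤ ∫ s in Set.Ioc md b, |F s - F a| := by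
    simpa [Real.norm_eq_abs] using
      norm_integral_le_integral_norm (μ := volume.restrict (Set.Ioc md b))
        (fun s => F s - F a)
  have e2 : |∫ s in Set.Ioc a md, (F s - F a)| ≤ ∫ s in Set.Ioc a md, |F s - F a| := by
    simpa [Real.norm_eq_abs] using
      norm_integral_le_integral_norm (μ := volume.restrict (Set.Ioc a md))
        (fun s => F s - F a)
  have e3 : ∫ s in Set.Ioc a b, |F s - F a|
      = (∫ s in Set.Ioc a md, |F s - F a|) + ∫ s in Set.Ioc md b, |F s - F a| := by
    rw [← Set.Ioc_union_Ioc_eq_Ioc ham hmb,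
      setIntegral_union (Set.Ioc_disjoint_Ioc_of_le le_rfl) measurableSet_Ioc hintabs2 hintabs1]
  have habs : |(∫ s in Set.Ioc md b, (F s - F a)) - ∫ s in Set.Ioc a md, (F s - F a)|
      ≤ ∫ s in Set.Ioc a b, |F s - F a| := by
    rw [e3]
    calc |(∫ s in Set.Ioc md b, (F s - F a)) - ∫ s in Set.Ioc a md, (F s - F a)|
        ≤ |∫ s in Set.Ioc md b, (F s - F a)| + |∫ s in Set.Ioc a md, (F s - F a)| := by
          rw [sub_eq_add_neg]
          exact (abs_add_le _ _).trans_eq (by rw [abs_neg])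
      _ ≤ (∫ s in Set.Ioc a md, |F s - F a|) + ∫ s in Set.Ioc md b, |F s - F a| := by
          rw [add_comm]
          exact add_le_add e2 e1
  have hmono : ∫ s in Set.Ioc a b, |F s - F a|
      ≤ ∫ s in Set.Ioc a b, L * |W s ω - W a ω| :=
    setIntegral_mono_on ((hFc.sub continuous_const).abs.integrableOn_Ioc)
      ((continuous_const.mul ((hWc.sub continuous_const).abs)).integrableOn_Ioc)
      measurableSet_Ioc (fun s _ => hLip (W s ω) (W a ω))
  have hfin : ∫ s in Set.Ioc a b, L * |W s ω - W a ω|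
      = L * ∫ s in Set.Ioc a b, |W s ω - W a ω| := integral_const_mul L _
  rw [hdjk, hsub, abs_mul,
    abs_of_pos (Real.rpow_pos_of_pos two_pos _)]
  exact mul_le_mul_of_nonneg_left (le_trans habs (le_trans hmono (le_of_eq hfin)))
    (le_of_lt (Real.rpow_pos_of_pos two_pos _))


lemma djk_ofReal_sq_le {Ω : Type*} [MeasureSpace Ω] (W : ℝ → Ω → ℝ) (σ g h : ℝ → ℝ)
    (hWcont : ∀ ω, Continuous fun t => W t ω)
    (hh : Continuous h) (hσc : Continuous σ) (hgc : Continuous g)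
    (L : ℝ) (hL0 : 0 ≤ L)
    (hLip : ∀ a b : ℝ, |g (h a) * σ (h a) - g (h b) * σ (h b)| ≤ L * |a - b|)
    (j k : ℕ) (hk : k < 2 ^ j) (ω : Ω) :
    ENNReal.ofReal (djk W h σ g j k ω ^ 2) ≤ ENNReal.ofReal (L ^ 2) *
      ∫⁻ s in Set.Ioc ((k:ℝ)/2^j) (((k:ℝ)+1)/2^j),
        ENNReal.ofReal ((W s ω - W ((k:ℝ)/2^j) ω) ^ 2) := by
  have hp : (0:ℝ) < 2 ^ j := by positivity
  set a : ℝ := (k:ℝ) / 2 ^ j with ha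
  set b : ℝ := ((k:ℝ) + 1) / 2 ^ j with hb
  have hba : b - a = 1 / 2 ^ j := by rw [ha, hb]; field_simp; ring
  set D : ℝ → ℝ := fun s => |W s ω - W a ω| with hD
  have hDc : Continuous D := ((hWcont ω).sub continuous_const).abs
  have key := djk_abs_le W σ g h hWcont hh hσc hgc L hLip j k hk ω
  set I : ℝ := ∫ s in Set.Ioc a b, D s with hI
  have hI0 : 0 ≤ I := setIntegral_nonneg measurableSet_Ioc fun s _ => abs_nonneg _
  have hsq2 : ((2:ℝ) ^ ((j:ℝ)/2)) ^ 2 = 2 ^ j := by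
    rw [← Real.rpow_natCast ((2:ℝ) ^ ((j:ℝ)/2)) 2, ← Real.rpow_mul (by norm_num)]
    norm_num
  have h1 : djk W h σ g j k ω ^ 2 ≤ 2 ^ j * (L ^ 2 * I ^ 2) := by
    have h2 := pow_le_pow_left₀ (abs_nonneg _) key 2
    rw [sq_abs] at h2
    calc djk W h σ g j k ω ^ 2 ≤ ((2:ℝ) ^ ((j:ℝ)/2) * (L * I)) ^ 2 := h2
      _ = 2 ^ j * (L ^ 2 * I ^ 2) := by rw [mul_pow, hsq2, mul_pow]
  have hIeq : ENNReal.ofReal I = ∫⁻ s in Set.Ioc a b, ENNReal.ofReal (D s) :=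
    ofReal_integral_eq_lintegral_ofReal (hDc.integrableOn_Ioc)
      (Filter.Eventually.of_forall fun s => abs_nonneg _)
  have hcs : (ENNReal.ofReal I) ^ 2
      ≤ (∫⁻ s in Set.Ioc a b, ENNReal.ofReal ((W s ω - W a ω) ^ 2)) *
        ENNReal.ofReal (1 / 2 ^ j) := by
    rw [hIeq]
    refine le_trans (lintegral_sq_le_aux _ _
      (hDc.measurable.ennreal_ofReal.aemeasurable)) (le_of_eq ?_)
    rw [Measure.restrict_apply_univ, Real.volume_Ioc, hba]
    congr 1
    refine lintegral_congr fun s => ?_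
    rw [← ENNReal.ofReal_pow (abs_nonneg _)]
    congr 1
    exact sq_abs _
  calc ENNReal.ofReal (djk W h σ g j k ω ^ 2)
      ≤ ENNReal.ofReal ((2:ℝ) ^ j * (L ^ 2 * I ^ 2)) := ENNReal.ofReal_le_ofReal h1
    _ = ENNReal.ofReal ((2:ℝ) ^ j) * (ENNReal.ofReal (L ^ 2) * (ENNReal.ofReal I) ^ 2) := by
        rw [ENNReal.ofReal_mul (by positivity), ENNReal.ofReal_mul (by positivity),
          ENNReal.ofReal_pow hI0]
    _ ≤ ENNReal.ofReal ((2:ℝ) ^ j) * (ENNReal.ofReal (L ^ 2) *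
          ((∫⁻ s in Set.Ioc a b, ENNReal.ofReal ((W s ω - W a ω) ^ 2)) *
            ENNReal.ofReal (1 / 2 ^ j))) :=
        mul_le_mul_right (mul_le_mul_right hcs _) _
    _ = (ENNReal.ofReal ((2:ℝ) ^ j) * ENNReal.ofReal ((1:ℝ) / 2 ^ j)) *
          (ENNReal.ofReal (L ^ 2) *
            ∫⁻ s in Set.Ioc a b, ENNReal.ofReal ((W s ω - W a ω) ^ 2)) := by ring
    _ = ENNReal.ofReal (L ^ 2) *
          ∫⁻ s in Set.Ioc a b, ENNReal.ofReal ((W s ω - W a ω) ^ 2) := by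
        rw [← ENNReal.ofReal_mul (by positivity), mul_one_div_cancel (ne_of_gt hp),
          ENNReal.ofReal_one, one_mul]

end Aux5

section Theorems

variable {Ω : Type*} [MeasureSpace Ω] [IsProbabilityMeasure (ℙ : Measure Ω)]

/-- Lemma 5. -/
theorem statement10 (W : ℝ → Ω → ℝ) (σ g h : ℝ → ℝ) (x₀ : ℝ)
    (hW : IsStdBM W) (hB : AssumptionBp σ) (hC : AssumptionCp g) (hD : IsScaleFun σ x₀ h) :
    ∃ c : ℝ,
      (∀ j₀ k : ℕ, k < 2 ^ j₀ → ∀ ω, cjk W h σ g j₀ k ω ^ 2 ≤ c * (2:ℝ) ^ (-(j₀ : ℝ))) ∧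
      ∀ j k : ℕ, k < 2 ^ j →
        ∫⁻ ω, ENNReal.ofReal (djk W h σ g j k ω ^ 2) ∂ℙ ≤
          ENNReal.ofReal (c * (2:ℝ) ^ (-(2 * (j : ℝ)))) := by
  obtain ⟨M, L, hM0, hL0, hMb, hLip⟩ := phi_bound_lipschitz hB hC hD
  set gm : ℝ≥0∞ := ∫⁻ x, ENNReal.ofReal (x ^ 2) ∂(gaussianReal 0 1) with hgm
  have hgmlt : gm < ∞ := gaussian_snd_moment_lt_top
  have hgm0 : (0:ℝ) ≤ gm.toReal := ENNReal.toReal_nonneg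
  have hh : Continuous h := continuous_iff_continuousAt.2 fun x => ((hD.2 x).differentiableAt).continuousAt
  have hσc : Continuous σ := hB.1.continuous
  have hgc : Continuous g := hC.1.continuous
  set c : ℝ := M ^ 2 + L ^ 2 * (gm.toReal + 1) with hc
  refine ⟨c, ?_, ?_⟩
  · -- the `c_{j₀ k}` bound
    intro j k hk ω
    have hp : (0:ℝ) < 2 ^ j := by positivity
    set a : ℝ := (k:ℝ) / 2 ^ j with ha
    set b : ℝ := ((k:ℝ) + 1) / 2 ^ j with hb
    have hb1 : b ≤ 1 := by
      rw [hb, div_le_one hp]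
      exact_mod_cast Nat.succ_le_of_lt hk
    have ha0 : 0 ≤ a := by positivity
    have hab : a ≤ b := by
      rw [ha, hb, div_le_div_iff_of_pos_right hp]
      linarith
    set F : ℝ → ℝ := fun s => g (h (W s ω)) * σ (h (W s ω)) with hF
    have hWc : Continuous fun s => W s ω := hW.2.2.1 ω
    have hFc : Continuous F := (hgc.comp (hh.comp hWc)).mul (hσc.comp (hh.comp hWc))
    have hindrw : (fun s => ind j k s * F s) = Set.indicator (Set.Ioc a b) F := by
      funext s
      rw [ind, Set.indicator_apply, Set.indicator_apply]
      split_ifs with hs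
      · simp
      · simp
    have hrew : ∫ s in (0:ℝ)..1, ind j k s * F s = ∫ s in Set.Ioc a b, F s := by
      rw [intervalIntegral.integral_of_le zero_le_one, hindrw,
        setIntegral_indicator measurableSet_Ioc,
        Set.inter_eq_self_of_subset_right (Set.Ioc_subset_Ioc ha0 hb1)]
    have hvol : volume (Set.Ioc a b) = ENNReal.ofReal (1 / 2 ^ j) := by
      rw [Real.volume_Ioc]
      congr 1
      rw [ha, hb]
      field_simp
      ring
    have habs : |∫ s in Set.Ioc a b, F s| ≤ M * (1 / 2 ^ j) := by
      have := norm_setIntegral_le_of_norm_le_const (μ := volume) (s := Set.Ioc a b)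
        (f := F) (C := M) (by rw [hvol]; exact ENNReal.ofReal_lt_top)
        (fun x _ => by rw [Real.norm_eq_abs]; exact hMb (W x ω))
      rw [Real.norm_eq_abs, measureReal_def, hvol, ENNReal.toReal_ofReal (by positivity)] at this
      exact this
    have hsq2 : ((2:ℝ) ^ ((j:ℝ)/2)) ^ 2 = 2 ^ j := by
      rw [← Real.rpow_natCast ((2:ℝ) ^ ((j:ℝ)/2)) 2, ← Real.rpow_mul (by norm_num)]
      norm_num
    have hneg : (2:ℝ) ^ (-(j:ℝ)) = (2 ^ j)⁻¹ := by
      rw [Real.rpow_neg (by norm_num), Real.rpow_natCast]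
    rw [cjk, hrew, mul_pow, hsq2, hneg]
    have h1 : (∫ s in Set.Ioc a b, F s) ^ 2 ≤ (M * (1 / 2 ^ j)) ^ 2 := by
      rw [← sq_abs]
      exact pow_le_pow_left₀ (abs_nonneg _) habs 2
    calc (2:ℝ) ^ j * (∫ s in Set.Ioc a b, F s) ^ 2
        ≤ 2 ^ j * (M * (1 / 2 ^ j)) ^ 2 := by
          exact mul_le_mul_of_nonneg_left h1 (by positivity)
      _ = M ^ 2 * (2 ^ j)⁻¹ := by field_simp
      _ ≤ c * (2 ^ j)⁻¹ := by
          apply mul_le_mul_of_nonneg_right _ (by positivity)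
          nlinarith
  · -- the `d_{jk}` bound
    intro j k hk
    have hp : (0:ℝ) < 2 ^ j := by positivity
    set a : ℝ := (k:ℝ) / 2 ^ j with ha
    set b : ℝ := ((k:ℝ) + 1) / 2 ^ j with hb
    have hba : b - a = 1 / 2 ^ j := by rw [ha, hb]; field_simp; ring
    have ha0 : 0 ≤ a := by positivity
    have hWun : Measurable (Function.uncurry W) :=
      measurable_uncurry_of_continuous_of_measurable hW.2.2.1 hW.1
    have hmeas : Measurable (Function.uncurry fun (ω : Ω) (s : ℝ) =>
        ENNReal.ofReal ((W s ω - W a ω) ^ 2)) := by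
      apply Measurable.ennreal_ofReal
      exact ((hWun.comp measurable_swap).sub ((hW.1 a).comp measurable_fst)).pow_const 2
    have hswap : ∫⁻ ω, (∫⁻ s in Set.Ioc a b, ENNReal.ofReal ((W s ω - W a ω) ^ 2)) ∂ℙ
        = ∫⁻ s in Set.Ioc a b, (∫⁻ ω, ENNReal.ofReal ((W s ω - W a ω) ^ 2) ∂ℙ) :=
      lintegral_lintegral_swap hmeas.aemeasurable
    have hinner : ∀ s ∈ Set.Ioc a b,
        (∫⁻ ω, ENNReal.ofReal ((W s ω - W a ω) ^ 2) ∂ℙ)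
          ≤ ENNReal.ofReal (1 / 2 ^ j) * gm := by
      intro s hs
      have hlaw := hW.2.2.2.1 a s ha0 (le_of_lt hs.1)
      have hYm : Measurable fun ω => W s ω - W a ω := (hW.1 s).sub (hW.1 a)
      have heq : ∫⁻ ω, ENNReal.ofReal ((W s ω - W a ω) ^ 2) ∂ℙ
          = ∫⁻ x, ENNReal.ofReal (x ^ 2) ∂(gaussianReal 0 (Real.toNNReal (s - a))) := by
        rw [← hlaw, lintegral_map (by fun_prop) hYm]
      rw [heq, lintegral_sq_gaussianReal]
      refine mul_le_mul_left ?_ gm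
      have hcoe : ((Real.toNNReal (s - a)) : ℝ≥0∞) = ENNReal.ofReal (s - a) := rfl
      rw [hcoe]
      exact ENNReal.ofReal_le_ofReal (by rw [← hba]; linarith [hs.2])
    have hrpow : (2:ℝ) ^ (-(2*(j:ℝ))) = ((1:ℝ)/2^j)^2 := by
      have h2 : -(2*(j:ℝ)) = -(((2*j : ℕ) : ℝ)) := by push_cast; ring
      rw [h2, Real.rpow_neg (by norm_num), Real.rpow_natCast, div_pow, one_pow, ← pow_mul,
        mul_comm j 2, one_div]
    calc ∫⁻ ω, ENNReal.ofReal (djk W h σ g j k ω ^ 2) ∂ℙ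
        ≤ ∫⁻ ω, ENNReal.ofReal (L ^ 2) *
            (∫⁻ s in Set.Ioc a b, ENNReal.ofReal ((W s ω - W a ω) ^ 2)) ∂ℙ :=
          lintegral_mono fun ω =>
            djk_ofReal_sq_le W σ g h hW.2.2.1 hh hσc hgc L hL0 hLip j k hk ω
      _ = ENNReal.ofReal (L ^ 2) *
            ∫⁻ ω, (∫⁻ s in Set.Ioc a b, ENNReal.ofReal ((W s ω - W a ω) ^ 2)) ∂ℙ :=
          lintegral_const_mul' _ _ ENNReal.ofReal_ne_top
      _ = ENNReal.ofReal (L ^ 2) *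
            ∫⁻ s in Set.Ioc a b, (∫⁻ ω, ENNReal.ofReal ((W s ω - W a ω) ^ 2) ∂ℙ) := by
          rw [hswap]
      _ ≤ ENNReal.ofReal (L ^ 2) *
            ((ENNReal.ofReal (1 / 2 ^ j) * gm) * volume (Set.Ioc a b)) := by
          refine mul_le_mul_right ?_ _
          refine le_trans (setLIntegral_mono' measurableSet_Ioc hinner) ?_
          exact le_of_eq (setLIntegral_const _ _)
      _ = ENNReal.ofReal (L ^ 2) *
            ((ENNReal.ofReal (1 / 2 ^ j) * ENNReal.ofReal gm.toReal) *
              ENNReal.ofReal (1 / 2 ^ j)) := by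
          rw [Real.volume_Ioc, hba, ENNReal.ofReal_toReal hgmlt.ne]
      _ = ENNReal.ofReal (L ^ 2 * ((1 / 2 ^ j * gm.toReal) * (1 / 2 ^ j))) := by
          rw [ENNReal.ofReal_mul (by positivity), ENNReal.ofReal_mul (by positivity),
            ENNReal.ofReal_mul (by positivity)]
      _ ≤ ENNReal.ofReal (c * (2:ℝ) ^ (-(2 * (j : ℝ)))) := by
          apply ENNReal.ofReal_le_ofReal
          rw [hrpow]
          have hre : L ^ 2 * ((1 / 2 ^ j * gm.toReal) * (1 / 2 ^ j))
              = (L ^ 2 * gm.toReal) * ((1:ℝ)/2^j)^2 := by ring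
          rw [hre]
          apply mul_le_mul_of_nonneg_right _ (by positivity)
          rw [hc]
          nlinarith

end Theorems

end RoundOff
end
end
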